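/- Let K = ℚ(ζ₅) with ring of integers 𝓞, let ι : K → ℂ be the embedding with ι(ζ₅) = exp(2πi/5) and σ : K → ℂ the embedding with σ(ζ₅) = exp(4πi/5), and let S = {z ∈ 𝓞 : |σ(z)| ≤ 1}. If z₁, z₂ ∈ S, z₁ ≠ z₂, and z₁ − z₂ is a unit of 𝓞 with |ι(z₁) − ι(z₂)| ≤ 1, then |ι(z₁) − ι(z₂)| = ((√5 − 1)/2)^j for some integer j with 0 ≤ j ≤ 1, i.e., |ι(z₁) − ι(z₂)| ∈ {(√5 − 1)/2, 1}. -/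

import Mathlib

open NumberField

set_option maxHeartbeats 1000000 in
/-- For `K = ℚ(ζ₅)`, embeddings `ι, σ` as in the paper, and `S = {z ∈ 𝓞 | |σ z| ≤ 1}`:
if `z₁, z₂ ∈ S`, `z₁ ≠ z₂`, `z₁ - z₂` is a unit of `𝓞`, and `|ι z₁ - ι z₂| ≤ 1`, then
`|ι z₁ - ι z₂| ∈ {(√5 - 1)/2, 1}`. -/
theorem stmt_15 (K : Type*) [Field K] [NumberField K] [IsCyclotomicExtension {5} ℚ K]
    (ζ : 𝓞 K) (hζ : IsPrimitiveRoot (ζ : K) 5)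
    (ι σ : K →+* ℂ)
    (hι : ι (ζ : K) = Complex.exp (2 * Real.pi * Complex.I / 5))
    (hσ : σ (ζ : K) = Complex.exp (4 * Real.pi * Complex.I / 5))
    (S : Set (𝓞 K)) (hS : S = {z : 𝓞 K | ‖σ (z : K)‖ ≤ 1})
    (z₁ z₂ : 𝓞 K) (h₁ : z₁ ∈ S) (h₂ : z₂ ∈ S) (hne : z₁ ≠ z₂)
    (hu : IsUnit (z₁ - z₂))
    (hle : ‖ι (z₁ : K) - ι (z₂ : K)‖ ≤ 1) :
    ‖ι (z₁ : K) - ι (z₂ : K)‖ = (Real.sqrt 5 - 1) / 2 ∨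
      ‖ι (z₁ : K) - ι (z₂ : K)‖ = 1 := by
  classical
  set ω : ℂ := Complex.exp (2 * Real.pi * Complex.I / 5) with hωdef
  -- basic facts about ω
  have hω : IsPrimitiveRoot ω 5 := by
    have := Complex.isPrimitiveRoot_exp 5 (by norm_num)
    convert this using 2; norm_num
  have h5 : ω ^ 5 = 1 := hω.pow_eq_one
  have hω1 : ω ≠ 1 := hω.ne_one (by norm_num)
  have hω0 : ω ≠ 0 := Complex.exp_ne_zero _
  have hC : 1 + ω + ω ^ 2 + ω ^ 3 + ω ^ 4 = 0 := by
    have h := mul_eq_zero.mp (show (ω - 1) * (1 + ω + ω ^ 2 + ω ^ 3 + ω ^ 4) = 0 by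
      linear_combination h5)
    rcases h with h | h
    · exact absurd (sub_eq_zero.mp h) hω1
    · exact h
  have habs : ‖ω‖ = 1 := by
    rw [hωdef, Complex.norm_exp]
    norm_num [Complex.div_re]
  have hmulconj : ω * (starRingEnd ℂ) ω = 1 := by
    rw [Complex.mul_conj]
    norm_cast
    rw [Complex.normSq_eq_norm_sq, habs]; norm_num
  have hconj : (starRingEnd ℂ) ω = ω ^ 4 := by
    apply mul_left_cancel₀ hω0
    rw [hmulconj]; linear_combination -h5
  have hσζ : σ (ζ : K) = ω ^ 2 := by
    rw [hσ, hωdef, sq, ← Complex.exp_add]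
    congr 1
    ring
  -- the unit u and its embeddings
  set u : 𝓞 K := z₁ - z₂ with hudef
  have hcoeu : ((u : 𝓞 K) : K) = (z₁ : K) - (z₂ : K) := by
    rw [hudef]; push_cast; ring
  -- coordinates of u
  have hfact : Fact (Nat.Prime 5) := ⟨by norm_num⟩
  have hζ5 : IsPrimitiveRoot (ζ : K) ((5 : ℕ+) : ℕ) := hζ
  obtain ⟨c₀, c₁, c₂, c₃, hpι, hqσ⟩ :
      ∃ c₀ c₁ c₂ c₃ : ℤ,
        ι (u : K) = (c₀:ℂ) + c₁ * ω + c₂ * ω^2 + c₃ * ω^3 ∧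
        σ (u : K) = (c₀:ℂ) + c₁ * ω^2 + c₂ * ω^4 + c₃ * ω := by
    set B := hζ.integralPowerBasis with hBdef
    have hdim : B.dim = 4 := by rw [hζ.integralPowerBasis_dim]; decide
    have hgen : B.gen = ζ := by
      have := hζ.integralPowerBasis_gen
      exact RingOfIntegers.coe_injective (by rw [this]; rfl)
    obtain ⟨f, hfdeg, hfu⟩ := B.exists_eq_aeval u
    rw [hdim] at hfdeg
    rw [hgen] at hfu
    refine ⟨f.coeff 0, f.coeff 1, f.coeff 2, f.coeff 3, ?_, ?_⟩
    · have : (u : K) = (f.coeff 0 : ℤ) • (1:K) + (f.coeff 1 : ℤ) • (ζ:K)^1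
          + (f.coeff 2 : ℤ) • (ζ:K)^2 + (f.coeff 3 : ℤ) • (ζ:K)^3 := by
        rw [hfu, Polynomial.aeval_eq_sum_range' hfdeg]
        simp [Finset.sum_range_succ]
      rw [this]
      simp only [zsmul_eq_mul, map_add, map_mul, map_pow, map_one, map_intCast, mul_one, hι]
      ring
    · have : (u : K) = (f.coeff 0 : ℤ) • (1:K) + (f.coeff 1 : ℤ) • (ζ:K)^1
          + (f.coeff 2 : ℤ) • (ζ:K)^2 + (f.coeff 3 : ℤ) • (ζ:K)^3 := by
        rw [hfu, Polynomial.aeval_eq_sum_range' hfdeg]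
        simp [Finset.sum_range_succ]
      rw [this]
      simp only [zsmul_eq_mul, map_add, map_mul, map_pow, map_one, map_intCast, mul_one, hσζ]
      linear_combination ((f.coeff 3 : ℂ) * ω) * h5
  -- conjugates
  have hpconj : (starRingEnd ℂ) (ι (u : K)) = (c₀:ℂ) + c₁ * ω^4 + c₂ * ω^3 + c₃ * ω^2 := by
    rw [hpι]
    simp only [map_add, map_mul, map_pow, map_intCast, hconj]
    linear_combination ((c₂:ℂ) * ω^3 + (c₃:ℂ) * ω^2 * (ω^5 + 1)) * h5
  have hqconj : (starRingEnd ℂ) (σ (u : K)) = (c₀:ℂ) + c₁ * ω^3 + c₂ * ω + c₃ * ω^4 := by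
    rw [hqσ]
    simp only [map_add, map_mul, map_pow, map_intCast, hconj]
    linear_combination ((c₁:ℂ) * ω^3 + (c₂:ℂ) * ω * (ω^10 + ω^5 + 1)) * h5
  -- the two real quantities
  set a : ℝ := ‖ι (u : K)‖ ^ 2 with hadef
  set b : ℝ := ‖σ (u : K)‖ ^ 2 with hbdef
  have hamul : ι (u : K) * (starRingEnd ℂ) (ι (u : K)) = (a : ℂ) := by
    rw [Complex.mul_conj, hadef, Complex.normSq_eq_norm_sq]
  have hbmul : σ (u : K) * (starRingEnd ℂ) (σ (u : K)) = (b : ℂ) := by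
    rw [Complex.mul_conj, hbdef, Complex.normSq_eq_norm_sq]
  -- the integers n and m
  set n : ℤ := 5*(c₀^2+c₁^2+c₂^2+c₃^2) - (c₀+c₁+c₂+c₃)^2 with hndef
  set m : ℤ := c₀*c₁ + c₁*c₂ + c₂*c₃ - c₀*c₂ - c₁*c₃ - c₀*c₃ with hmdef
  have hsumC : 2*((a:ℂ) + b) = (n : ℂ) := by
    rw [← hamul, ← hbmul, hpconj, hqconj, hpι, hqσ, hndef]
    push_cast
    linear_combination (- 4*(c₃:ℂ)^2 + 2*(c₂:ℂ)*c₃ - 4*(c₂:ℂ)^2 + 2*(c₁:ℂ)*c₃ + 2*(c₁:ℂ)*c₂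
      - 4*(c₁:ℂ)^2 + 2*(c₀:ℂ)*c₃ + 2*(c₀:ℂ)*c₂ + 2*(c₀:ℂ)*c₁ + 4*ω*(c₃:ℂ)^2 - 2*ω*(c₂:ℂ)*c₃
      + 4*ω*(c₂:ℂ)^2 - 2*ω*(c₁:ℂ)*c₃ - 2*ω*(c₁:ℂ)*c₂ + 4*ω*(c₁:ℂ)^2 + 2*ω^2*(c₂:ℂ)*c₃
      - 2*ω^3*(c₂:ℂ)*c₃ + 2*ω^3*(c₁:ℂ)*c₃ + 2*ω^3*(c₁:ℂ)*c₂ + 2*ω^4*(c₂:ℂ)*c₃) * hC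
  have hdiffC : (a:ℂ) - b = (1 + 2*ω + 2*ω^4) * (m : ℂ) := by
    rw [← hamul, ← hbmul, hpconj, hqconj, hpι, hqσ, hmdef]
    push_cast
    linear_combination (- (c₂:ℂ)*c₃ + (c₁:ℂ)*c₃ - (c₁:ℂ)*c₂ + (c₀:ℂ)*c₃ + (c₀:ℂ)*c₂
      - (c₀:ℂ)*c₁ - ω*(c₂:ℂ)*c₃ + ω*(c₁:ℂ)*c₃ - ω*(c₁:ℂ)*c₂ + ω^2*(c₂:ℂ)*c₃
      - 2*ω^2*(c₁:ℂ)*c₃ + 2*ω^2*(c₁:ℂ)*c₂ + ω^3*(c₂:ℂ)*c₃ + ω^3*(c₁:ℂ)*c₃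
      - ω^3*(c₁:ℂ)*c₂ - ω^4*(c₂:ℂ)*c₃) * hC
  -- (1 + 2ω + 2ω⁴) = √5
  have hz5 : (1 + 2*ω + 2*ω^4 : ℂ) = (Real.sqrt 5 : ℝ) := by
    set z : ℂ := 1 + 2*ω + 2*ω^4 with hzdef
    have hzsq : z^2 = 5 := by
      rw [hzdef]; linear_combination (-4 + 8*ω - 4*ω^3 + 4*ω^4) * hC
    have hzconj : (starRingEnd ℂ) z = z := by
      rw [hzdef]
      simp only [map_add, map_mul, map_pow, map_one, map_ofNat, hconj]
      linear_combination (2*ω*(ω^10 + ω^5 + 1)) * h5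
    have hzim : z.im = 0 := Complex.conj_eq_iff_im.mp hzconj
    have hω4 : ω^4 = (starRingEnd ℂ) ω := hconj.symm
    have hωre : ω.re = Real.cos (2 * Real.pi / 5) := by
      have : ω = Complex.exp ((2 * Real.pi / 5 : ℝ) * Complex.I) := by
        rw [hωdef]; congr 1; push_cast; ring
      rw [this, Complex.exp_ofReal_mul_I_re]
    have hzval : z = ((1 + 4 * ω.re : ℝ) : ℂ) := by
      have h1 : z = 1 + 2*(ω + (starRingEnd ℂ) ω) := by rw [hzdef, hω4]; ring
      rw [h1, Complex.add_conj]
      push_cast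
      ring
    have hzre : 0 < z.re := by
      rw [hzval]
      simp only [Complex.ofReal_re]
      have hcos : 0 < Real.cos (2 * Real.pi / 5) := by
        apply Real.cos_pos_of_mem_Ioo
        constructor
        · nlinarith [Real.pi_pos]
        · nlinarith [Real.pi_pos]
      rw [hωre]
      nlinarith [hcos]
    have hzr : (z.re : ℂ) = z := Complex.conj_eq_iff_re.mp hzconj
    have hre5 : z.re ^ 2 = 5 := by
      have hc : ((z.re ^ 2 : ℝ) : ℂ) = ((5 : ℝ) : ℂ) := by
        push_cast
        rw [hzr, hzsq]
      exact_mod_cast hc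
    have : z.re = Real.sqrt 5 := by
      rw [← Real.sqrt_sq (le_of_lt hzre), hre5]
    apply Complex.ext
    · simpa using this
    · simpa using hzim
  have hdiffR : a - b = Real.sqrt 5 * (m : ℝ) := by
    have : ((a - b : ℝ) : ℂ) = ((Real.sqrt 5 * (m:ℝ) : ℝ) : ℂ) := by
      push_cast
      rw [← hz5]
      exact_mod_cast hdiffC
    exact_mod_cast this
  have hsumR : 2*(a + b) = (n : ℝ) := by
    have : ((2*(a+b) : ℝ) : ℂ) = ((n:ℝ) : ℂ) := by exact_mod_cast hsumC
    exact_mod_cast this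
  -- the norm condition : a * b = 1
  have hmul : a * b = 1 := by
    have hext : Algebra.adjoin ℚ ({(ζ : K)} : Set K) = ⊤ :=
      IsCyclotomicExtension.adjoin_primitive_root_eq_top (n := 5) hζ
    set ι' : K →+* ℂ := (starRingEnd ℂ).comp ι with hι'def
    set σ' : K →+* ℂ := (starRingEnd ℂ).comp σ with hσ'def
    have hι'ζ : ι' (ζ : K) = ω ^ 4 := by rw [hι'def]; simp [hι, hconj]
    have hσ'ζ : σ' (ζ : K) = ω ^ 3 := by
      rw [hσ'def]; simp only [RingHom.coe_comp, Function.comp_apply, hσζ, map_pow, hconj]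
      linear_combination ω^3 * h5
    have hpow : ∀ i j : ℕ, i < 5 → j < 5 → i ≠ j → ω ^ i ≠ ω ^ j := by
      intro i j hi hj hij h
      exact hij (hω.pow_inj hi hj h)
    have hισ : ι ≠ σ := fun h => hpow 1 2 (by norm_num) (by norm_num) (by norm_num)
      (by rw [pow_one, ← hσζ, ← hι, h])
    have hιι' : ι ≠ ι' := fun h => hpow 1 4 (by norm_num) (by norm_num) (by norm_num)
      (by rw [pow_one, ← hι'ζ, ← hι, h])
    have hισ' : ι ≠ σ' := fun h => hpow 1 3 (by norm_num) (by norm_num) (by norm_num)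
      (by rw [pow_one, ← hσ'ζ, ← hι, h])
    have hσι' : σ ≠ ι' := fun h => hpow 2 4 (by norm_num) (by norm_num) (by norm_num)
      (by rw [← hι'ζ, ← hσζ, h])
    have hσσ' : σ ≠ σ' := fun h => hpow 2 3 (by norm_num) (by norm_num) (by norm_num)
      (by rw [← hσ'ζ, ← hσζ, h])
    have hι'σ' : ι' ≠ σ' := fun h => hpow 4 3 (by norm_num) (by norm_num) (by norm_num)
      (by rw [← hσ'ζ, ← hι'ζ, h])
    have hcard : Fintype.card (K →+* ℂ) = 4 := by
      rw [NumberField.Embeddings.card K ℂ]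
      rw [IsCyclotomicExtension.finrank (n := 5) K
        (Polynomial.cyclotomic.irreducible_rat (by norm_num))]
      decide
    have huniv : (Finset.univ : Finset (K →+* ℂ)) = {ι, σ, ι', σ'} := by
      symm
      apply Finset.eq_univ_of_card
      rw [hcard]
      rw [Finset.card_insert_of_notMem (by simp [hισ, hιι', hισ']),
        Finset.card_insert_of_notMem (by simp [hσι', hσσ']),
        Finset.card_insert_of_notMem (by simp [hι'σ']), Finset.card_singleton]
    have hN : |Algebra.norm ℚ ((u : 𝓞 K) : K)| = 1 := NumberField.isUnit_iff_norm.mp hu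
    have hprod : (algebraMap ℚ ℂ) (Algebra.norm ℚ ((u : 𝓞 K) : K)) =
        ∏ φ : K →+* ℂ, φ (u : K) := by
      rw [Algebra.norm_eq_prod_embeddings]
      exact (Fintype.prod_equiv (RingHom.equivRatAlgHom _ _) (fun φ => φ ((u : 𝓞 K):K))
        (fun ψ => ψ ((u : 𝓞 K):K)) fun φ => by simp [RingHom.equivRatAlgHom_apply]).symm
    have habsprod : ‖(algebraMap ℚ ℂ) (Algebra.norm ℚ ((u : 𝓞 K) : K))‖ = 1 := by
      rw [eq_ratCast, ← Complex.ofReal_ratCast, Complex.norm_real, Real.norm_eq_abs, ← Rat.cast_abs, hN]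
      norm_num
    have hfour : ∏ φ : K →+* ℂ, ‖φ (u : K)‖ =
        ‖ι (u:K)‖ ^ 2 * ‖σ (u:K)‖ ^ 2 := by
      rw [huniv]
      rw [Finset.prod_insert (by simp [hισ, hιι', hισ']),
        Finset.prod_insert (by simp [hσι', hσσ']),
        Finset.prod_insert (by simp [hι'σ']), Finset.prod_singleton]
      have e1 : ι' ((u : 𝓞 K):K) = (starRingEnd ℂ) (ι ((u : 𝓞 K):K)) := rfl
      have e2 : σ' ((u : 𝓞 K):K) = (starRingEnd ℂ) (σ ((u : 𝓞 K):K)) := rfl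
      rw [e1, e2, Complex.norm_conj, Complex.norm_conj]
      ring
    rw [hadef, hbdef, ← hfour, ← norm_prod, ← hprod, habsprod]
  -- bounds
  have hA : ‖ι (z₁ : K) - ι (z₂ : K)‖ = ‖ι (u : K)‖ := by
    rw [hcoeu, RingHom.map_sub]
  have ha1 : a ≤ 1 := by
    rw [hadef]
    calc ‖ι (u : K)‖ ^ 2 ≤ 1 ^ 2 := by
          apply pow_le_pow_left₀ (norm_nonneg _)
          rw [← hA]; exact hle
      _ = 1 := one_pow 2
  have ha0 : 0 < a := by
    have h1 : u ≠ 0 := sub_ne_zero.mpr hne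
    have h2 : ((u : 𝓞 K) : K) ≠ 0 :=
      fun h => h1 (RingOfIntegers.coe_injective (by simpa using h))
    have h3 : ι ((u : 𝓞 K) : K) ≠ 0 := fun h => h2 (ι.injective (by simpa using h))
    rw [hadef]
    apply pow_pos
    exact norm_pos_iff.mpr h3
  have hb4 : b ≤ 4 := by
    rw [hS] at h₁ h₂
    have hB : ‖σ (u : K)‖ ≤ 2 := by
      rw [hcoeu, map_sub, sub_eq_add_neg]
      calc ‖σ (z₁:K) + -(σ (z₂:K))‖
          ≤ ‖σ (z₁:K)‖ + ‖-(σ (z₂:K))‖ := norm_add_le _ _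
        _ ≤ 1 + 1 := by rw [norm_neg]; exact add_le_add h₁ h₂
        _ = 2 := by norm_num
    rw [hbdef]
    calc ‖σ (u : K)‖ ^ 2 ≤ 2 ^ 2 := by
          apply pow_le_pow_left₀ (norm_nonneg _) hB
      _ = 4 := by norm_num
  -- final arithmetic
  clear_value a b n m
  clear hsumC hdiffC hpι hqσ hpconj hqconj hamul hbmul hC h5 hω hω1 hω0 habs hmulconj hconj hσζ hι hσ hζ5 hζ
  have hs5 : Real.sqrt 5 ^ 2 = 5 := Real.sq_sqrt (by norm_num)
  have hsqrt5nn : 0 ≤ Real.sqrt 5 := Real.sqrt_nonneg 5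
  have hb0 : 0 < b := by nlinarith
  have hb1 : 1 ≤ b := by nlinarith
  have hn4 : (4:ℝ) ≤ (n:ℝ) := by nlinarith [sq_nonneg (a - b)]
  have hprod48 : 0 ≤ (4 - b) * (4*b - 1) :=
    mul_nonneg (by linarith) (by linarith)
  have hn8R : (n:ℝ) ≤ 17/2 := by nlinarith [hprod48, hmul, hb0, hsumR]
  have hn4' : (4:ℤ) ≤ n := by exact_mod_cast hn4
  have hn8' : n ≤ 8 := by
    have h9 : (n:ℝ) < 9 := by linarith
    exact_mod_cast Int.lt_add_one_iff.mp (by exact_mod_cast h9)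
  have key : (n:ℝ)^2 = 16 + 20*(m:ℝ)^2 := by
    linear_combination (-(2*(a+b)+(n:ℝ)))*hsumR + (4*((a-b)+Real.sqrt 5*(m:ℝ)))*hdiffR
      + 16*hmul + 4*(m:ℝ)^2*hs5
  have keyZ : n^2 = 16 + 20*m^2 := by exact_mod_cast key
  obtain ⟨M, hMe, hM0⟩ : ∃ M : ℤ, m^2 = M ∧ 0 ≤ M := ⟨_, rfl, sq_nonneg m⟩
  rw [hMe] at keyZ
  have hAnn : 0 ≤ ‖ι (z₁ : K) - ι (z₂ : K)‖ := norm_nonneg _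
  have haA : a = ‖ι (z₁ : K) - ι (z₂ : K)‖ ^ 2 := by rw [hadef, hA]
  interval_cases n
  · -- n = 4 : a = 1
    have hMz : M = 0 := by omega
    have hm0 : m = 0 := by
      have : m^2 = 0 := by rw [hMe, hMz]
      exact pow_eq_zero_iff (by norm_num) |>.mp this
    rw [hm0] at hdiffR
    push_cast at hdiffR hsumR
    have ha : a = 1 := by nlinarith
    right
    have : ‖ι (z₁ : K) - ι (z₂ : K)‖ ^ 2 = 1 := by rw [← haA, ha]
    nlinarith
  · omega
  · -- n = 6 : a = (3 - √5)/2
    have hM1 : M = 1 := by omega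
    have hm1 : (m:ℝ)^2 = 1 := by
      have : m^2 = 1 := by rw [hMe, hM1]
      exact_mod_cast this
    push_cast at hsumR
    have hd2 : (a - b)^2 = 5 := by
      rw [hdiffR, mul_pow, hs5, hm1]; ring
    have hfac : (2*a - 3 + Real.sqrt 5) * (2*a - 3 - Real.sqrt 5) = 0 := by
      linear_combination hd2 + (3*a - b - 3) * (by linarith : a + b = 3) - hs5
    rcases mul_eq_zero.mp hfac with h | h
    · left
      have ha : a = (3 - Real.sqrt 5)/2 := by linarith
      have htnn : 0 ≤ (Real.sqrt 5 - 1)/2 := by nlinarith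
      have hsq : ‖ι (z₁ : K) - ι (z₂ : K)‖ ^ 2 = ((Real.sqrt 5 - 1)/2)^2 := by
        rw [← haA, ha]; nlinarith
      calc ‖ι (z₁ : K) - ι (z₂ : K)‖
          = Real.sqrt (‖ι (z₁ : K) - ι (z₂ : K)‖ ^ 2) :=
            (Real.sqrt_sq hAnn).symm
        _ = Real.sqrt (((Real.sqrt 5 - 1)/2)^2) := by rw [hsq]
        _ = (Real.sqrt 5 - 1)/2 := Real.sqrt_sq htnn
    · exfalso
      have : a = (3 + Real.sqrt 5)/2 := by linarith
      nlinarith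
  · omega
  · omega
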